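/- Let f be a natural number with f ≥ 1, let B ⊆ Fin (3f+1) be a finite set with |B| ≤ f, and define the leader of view v ∈ ℕ to be v mod (3f+1). Then for every a ∈ ℕ there exists a view v with a ≤ v and v+2 ≤ a + 3f + 2 such that the leaders of views v, v+1, and v+2 are all outside B. -/

import Mathlib

/-- The leader of view `v` under round-robin rotation among `3f+1` replicas. -/
def leader (f : ℕ) (v : ℕ) : Fin (3 * f + 1) :=
  ⟨v % (3 * f + 1), Nat.mod_lt _ (by omega)⟩

theorem window_three_consecutive_honest
    (f : ℕ) (hf : 1 ≤ f)
    (B : Finset (Fin (3 * f + 1))) (hB : B.card ≤ f) :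
    ∀ a : ℕ, ∃ v : ℕ, a ≤ v ∧ v + 2 ≤ a + 3 * f + 2 ∧
      leader f v ∉ B ∧ leader f (v + 1) ∉ B ∧ leader f (v + 2) ∉ B := by
  intro a
  -- find r with r, r+1, r+2 ∉ B (in Fin (3f+1))
  set T : Finset (Fin (3 * f + 1)) := B ∪ B.image (· - 1) ∪ B.image (· - 2) with hT
  have hTcard : T.card ≤ 3 * f := by
    have h1 := Finset.card_union_le (B ∪ B.image (· - 1)) (B.image (· - 2))
    have h2 := Finset.card_union_le B (B.image (· - 1))
    have h3 := Finset.card_image_le (s := B) (f := (· - 1))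
    have h4 := Finset.card_image_le (s := B) (f := (· - 2))
    rw [hT]
    omega
  obtain ⟨r, hr⟩ : ∃ r : Fin (3 * f + 1), r ∉ T := by
    by_contra h
    push_neg at h
    have hsub : (Finset.univ : Finset (Fin (3 * f + 1))) ⊆ T := fun x _ => h x
    have := Finset.card_le_card hsub
    rw [Finset.card_univ, Fintype.card_fin] at this
    omega
  rw [hT] at hr
  simp only [Finset.mem_union, Finset.mem_image, not_or, not_exists] at hr
  obtain ⟨⟨hr0, hr1⟩, hr2⟩ := hr
  have hB1 : r + 1 ∉ B := by
    intro hmem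
    have := hr1 (r + 1)
    simp [hmem] at this
  have hB2 : r + 2 ∉ B := by
    intro hmem
    have := hr2 (r + 2)
    simp [hmem] at this
  -- choose v ≡ r (mod 3f+1) with a ≤ v < a + 3f+1
  have hnpos : 0 < 3 * f + 1 := by omega
  have hm := Nat.mod_lt a hnpos
  set k := (r.val + (3 * f + 1) - a % (3 * f + 1)) % (3 * f + 1) with hk
  have hval : (a + k) % (3 * f + 1) = r.val := by
    rw [hk, Nat.add_mod_mod]
    have hdm := Nat.div_add_mod a (3 * f + 1)
    have heq : a + (r.val + (3 * f + 1) - a % (3 * f + 1))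
        = (3 * f + 1) * (a / (3 * f + 1)) + (r.val + (3 * f + 1)) := by omega
    rw [heq, Nat.mul_add_mod, Nat.add_mod_right, Nat.mod_eq_of_lt r.isLt]
  have h1n : 1 % (3 * f + 1) = 1 := Nat.mod_eq_of_lt (by omega)
  have h2n : 2 % (3 * f + 1) = 2 := Nat.mod_eq_of_lt (by omega)
  have hone : ((1 : Fin (3 * f + 1))).val = 1 := by
    rw [Fin.val_one']; exact h1n
  have htwo : ((2 : Fin (3 * f + 1))).val = 2 := by
    have h12 : (2 : Fin (3 * f + 1)) = 1 + 1 := by ext; simp [Fin.val_add]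
    rw [h12, Fin.add_def, hone]; exact h2n
  have hval1 : (a + k + 1) % (3 * f + 1) = (r + 1).val := by
    rw [Fin.add_def, hone, Nat.add_mod (a + k) 1, hval, h1n]
  have hval2 : (a + k + 2) % (3 * f + 1) = (r + 2).val := by
    rw [Fin.add_def, htwo, Nat.add_mod (a + k) 2, hval, h2n]
  refine ⟨a + k, Nat.le_add_right _ _, ?_, ?_, ?_, ?_⟩
  · have : k < 3 * f + 1 := Nat.mod_lt _ hnpos
    omega
  · have : leader f (a + k) = r := Fin.ext hval
    rw [this]; exact hr0
  · have : leader f (a + k + 1) = r + 1 := Fin.ext hval1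
    rw [this]; exact hB1
  · have : leader f (a + k + 2) = r + 2 := Fin.ext hval2
    rw [this]; exact hB2
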